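/- For every real s ∈ [−1, 0], there exists a sequence (β_n)_{n≥1} of nonnegative reals with Σ_{n≥1} β_n = 1 and β_1 > 0 such that the sequence a_n = (n+1)^s satisfies a_0 = 1 and a_n = Σ_{k=1}^{n} β_k a_{n−k} for all n ≥ 1; equivalently, Σ_{n≥0} (n+1)^s t^n = (1 − Σ_{n≥1} β_n t^n)^{-1} for all t ∈ [0,1). -/

import Mathlib

open Finset

noncomputable def renA (s : ℝ) (n : ℕ) : ℝ := ((n : ℝ) + 1) ^ s

noncomputable def bet (s : ℝ) : ℕ → ℝ
  | 0 => 0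
  | n + 1 =>
      renA s (n + 1) -
        ∑ k ∈ (Finset.Icc 1 n).attach, bet s k.1 * renA s (n + 1 - k.1)
  decreasing_by
    have := (Finset.mem_Icc.mp k.2).2; omega

lemma bet_zero (s : ℝ) : bet s 0 = 0 := by rw [bet]

lemma bet_rec (s : ℝ) (n : ℕ) (hn : 1 ≤ n) :
    renA s n = ∑ k ∈ Finset.Icc 1 n, bet s k * renA s (n - k) := by
  obtain ⟨m, rfl⟩ := Nat.exists_eq_add_of_le hn
  rw [show 1 + m = m + 1 by omega]
  rw [Finset.sum_Icc_succ_top (by omega)]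
  rw [bet]
  rw [← Finset.sum_attach (Finset.Icc 1 m) (fun k => bet s k * renA s (m + 1 - k))]
  simp [renA]


variable {s : ℝ}

lemma renA_pos (n : ℕ) : 0 < renA s n :=
  Real.rpow_pos_of_pos (by positivity) s

lemma renA_zero : renA s 0 = 1 := by simp [renA]

lemma renA_anti (hs0 : s ≤ 0) {m n : ℕ} (h : m ≤ n) : renA s n ≤ renA s m :=
  Real.rpow_le_rpow_of_nonpos (by positivity) (by have : (m:ℝ) ≤ n := Nat.cast_le.mpr h; linarith) hs0

lemma renA_logconvex (hs0 : s ≤ 0) {m n : ℕ} (h : m ≤ n) :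
    renA s (m + 1) * renA s n ≤ renA s (n + 1) * renA s m := by
  unfold renA
  rw [← Real.mul_rpow (by positivity) (by positivity),
      ← Real.mul_rpow (by positivity) (by positivity)]
  apply Real.rpow_le_rpow_of_nonpos (by positivity) ?_ hs0
  have : (m : ℝ) ≤ (n : ℝ) := Nat.cast_le.mpr h
  push_cast
  nlinarith

lemma bet_nonneg (hs0 : s ≤ 0) (n : ℕ) : 0 ≤ bet s n := by
  induction n using Nat.strong_induction_on with
  | _ n ih =>
    match n with
    | 0 => simp [bet]
    | 1 =>
      have : bet s 1 = renA s 1 := by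
        rw [bet]
        rw [show Finset.Icc 1 0 = (∅ : Finset ℕ) by rfl]
        simp
      rw [this]; exact (renA_pos 1).le
    | (m + 2) =>
      -- β (m+2) = renA (m+2) - ∑_{k∈Icc 1 (m+1)} β k * renA (m+2-k)
      have hrec : renA s (m + 1) = ∑ k ∈ Finset.Icc 1 (m+1), bet s k * renA s (m + 1 - k) :=
        bet_rec s (m+1) (by omega)
      have hbet : bet s (m + 2) =
          renA s (m + 2) - ∑ k ∈ Finset.Icc 1 (m+1), bet s k * renA s (m + 2 - k) := by
        rw [bet, ← Finset.sum_attach (Finset.Icc 1 (m+1))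
          (fun k => bet s k * renA s (m + 2 - k))]
      rw [hbet, sub_nonneg]
      -- key: renA (m+1) * ∑ β_k a(m+2-k) ≤ renA (m+2) * ∑ β_k a(m+1-k)
      have key : renA s (m+1) * (∑ k ∈ Finset.Icc 1 (m+1), bet s k * renA s (m + 2 - k)) ≤
          renA s (m+2) * (∑ k ∈ Finset.Icc 1 (m+1), bet s k * renA s (m + 1 - k)) := by
        rw [Finset.mul_sum, Finset.mul_sum]
        apply Finset.sum_le_sum
        intro k hk
        obtain ⟨hk1, hk2⟩ := Finset.mem_Icc.mp hk
        have hb : 0 ≤ bet s k := ih k (by omega)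
        have h1 : m + 2 - k = (m + 1 - k) + 1 := by omega
        have h2 : m + 1 - k ≤ m + 1 := by omega
        have := renA_logconvex hs0 h2 (s := s)
        rw [h1]
        calc renA s (m+1) * (bet s k * renA s (m + 1 - k + 1))
            = bet s k * (renA s (m + 1 - k + 1) * renA s (m+1)) := by ring
          _ ≤ bet s k * (renA s (m + 1 + 1) * renA s (m + 1 - k)) :=
              mul_le_mul_of_nonneg_left this hb
          _ = renA s (m+2) * (bet s k * renA s (m+1-k)) := by ring
      rw [← hrec] at key
      have h0 : 0 < renA s (m+1) := renA_pos _
      exact le_of_mul_le_mul_left (key.trans_eq (mul_comm _ _)) h0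

lemma sum_Icc_one (f : ℕ → ℝ) (n : ℕ) :
    ∑ k ∈ Finset.Icc 1 n, f k = ∑ i ∈ Finset.range n, f (i + 1) := by
  rw [← Finset.Ico_add_one_right_eq_Icc, Finset.sum_Ico_eq_sum_range]
  simp [add_comm]

lemma bet_partial_le_one (hs0 : s ≤ 0) (N : ℕ) : ∑ k ∈ Finset.Icc 1 N, bet s k ≤ 1 := by
  rcases Nat.eq_zero_or_pos N with rfl | hN
  · simp
  have hrec := bet_rec s N hN
  have h1 : (∑ k ∈ Finset.Icc 1 N, bet s k) * renA s N ≤ renA s N := by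
    calc (∑ k ∈ Finset.Icc 1 N, bet s k) * renA s N
        = ∑ k ∈ Finset.Icc 1 N, bet s k * renA s N := by rw [Finset.sum_mul]
      _ ≤ ∑ k ∈ Finset.Icc 1 N, bet s k * renA s (N - k) := by
          apply Finset.sum_le_sum
          intro k hk
          exact mul_le_mul_of_nonneg_left (renA_anti hs0 (Nat.sub_le N k)) (bet_nonneg hs0 k)
      _ = renA s N := hrec.symm
  have h0 : 0 < renA s N := renA_pos N
  nlinarith

lemma bet_summable (hs0 : s ≤ 0) : Summable (fun n : ℕ => bet s (n + 1)) := by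
  apply summable_of_sum_range_le (c := 1) (fun n => bet_nonneg hs0 _)
  intro n
  rw [← sum_Icc_one]
  exact bet_partial_le_one hs0 n

lemma renA_sum_tendsto (hs1 : -1 ≤ s) :
    Filter.Tendsto (fun N => ∑ n ∈ Finset.range N, renA s n) Filter.atTop Filter.atTop := by
  refine Filter.tendsto_atTop_mono (fun N => ?_) Real.tendsto_sum_range_one_div_nat_succ_atTop
  apply Finset.sum_le_sum
  intro i _
  have h1 : (1 : ℝ) ≤ (i : ℝ) + 1 := by have : (0:ℝ) ≤ i := Nat.cast_nonneg i; linarith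
  have : ((i:ℝ)+1) ^ (-1 : ℝ) ≤ ((i:ℝ)+1) ^ s := Real.rpow_le_rpow_of_exponent_le h1 hs1
  rw [Real.rpow_neg_one] at this
  calc (1 / ((i:ℝ)+1)) = ((i:ℝ)+1)⁻¹ := one_div _
    _ ≤ renA s i := this

lemma bet_hasSum (hs1 : -1 ≤ s) (hs0 : s ≤ 0) : HasSum (fun n : ℕ => bet s (n + 1)) 1 := by
  have hsm := bet_summable hs0
  set T := ∑' n : ℕ, bet s (n + 1) with hT
  suffices hT1 : T = 1 by rw [← hT1]; exact hsm.hasSum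
  have hle : T ≤ 1 := Real.tsum_le_of_sum_range_le (fun n => bet_nonneg hs0 _)
    (fun n => by rw [← sum_Icc_one]; exact bet_partial_le_one hs0 n)
  have hge : 1 ≤ T := by
    -- S N * (1 - T) ≤ 1 for all N, S N → ∞
    by_contra hlt
    push_neg at hlt
    have hkey : ∀ N : ℕ, (∑ n ∈ Finset.range (N+1), renA s n) * (1 - T) ≤ 1 := by
      intro N
      set S := fun M : ℕ => ∑ n ∈ Finset.range (M+1), renA s n with hS
      have hSmono : ∀ {a b : ℕ}, a ≤ b → S a ≤ S b := by
        intro a b hab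
        apply Finset.sum_le_sum_of_subset_of_nonneg
        · exact Finset.range_subset_range.mpr (by omega)
        · intro i _ _; exact (renA_pos i).le
      have hsplit : S N = 1 + ∑ n ∈ Finset.Icc 1 N, renA s n := by
        show (∑ n ∈ Finset.range (N+1), renA s n) = _
        rw [Finset.sum_range_succ', sum_Icc_one]
        simp [renA_zero, add_comm]
      have hswap : ∑ n ∈ Finset.Icc 1 N, renA s n
          = ∑ k ∈ Finset.Icc 1 N, ∑ n ∈ Finset.Icc k N, bet s k * renA s (n - k) := by
        rw [Finset.sum_congr rfl (fun n hn => bet_rec s n (Finset.mem_Icc.mp hn).1)]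
        apply Finset.sum_comm' (s := Finset.Icc 1 N) (t := fun n => Finset.Icc 1 n)
        intro n k
        simp only [Finset.mem_Icc]
        omega
      have hinner : ∀ k ∈ Finset.Icc 1 N, ∑ n ∈ Finset.Icc k N, renA s (n - k) ≤ S N := by
        intro k hk
        obtain ⟨hk1, hk2⟩ := Finset.mem_Icc.mp hk
        have himg : ∑ n ∈ Finset.Icc k N, renA s (n - k)
            = ∑ m ∈ Finset.range (N - k + 1), renA s m := by
          rw [← Finset.Ico_add_one_right_eq_Icc, Finset.sum_Ico_eq_sum_range]
          apply Finset.sum_congr (by congr 1; omega)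
          intro m _
          congr 1
          omega
        rw [himg]
        exact hSmono (by omega)
      have hbnd : ∑ n ∈ Finset.Icc 1 N, renA s n ≤ T * S N := by
        rw [hswap]
        calc ∑ k ∈ Finset.Icc 1 N, ∑ n ∈ Finset.Icc k N, bet s k * renA s (n - k)
            = ∑ k ∈ Finset.Icc 1 N, bet s k * ∑ n ∈ Finset.Icc k N, renA s (n - k) := by
              simp [Finset.mul_sum]
          _ ≤ ∑ k ∈ Finset.Icc 1 N, bet s k * S N := by
              apply Finset.sum_le_sum
              intro k hk
              exact mul_le_mul_of_nonneg_left (hinner k hk) (bet_nonneg hs0 k)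
          _ = (∑ k ∈ Finset.Icc 1 N, bet s k) * S N := by rw [Finset.sum_mul]
          _ ≤ T * S N := by
              apply mul_le_mul_of_nonneg_right ?_ ?_
              · rw [sum_Icc_one]
                exact Summable.sum_le_tsum (Finset.range N) (fun i _ => bet_nonneg hs0 _) hsm
              · rw [hS]
                exact Finset.sum_nonneg (fun i _ => (renA_pos i).le)
      nlinarith [hsplit, hbnd]
    have htend : Filter.Tendsto (fun N => (∑ n ∈ Finset.range (N+1), renA s n) * (1 - T))
        Filter.atTop Filter.atTop := by
      apply Filter.Tendsto.atTop_mul_const (by linarith)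
      exact (renA_sum_tendsto hs1).comp (Filter.tendsto_add_atTop_nat 1)
    obtain ⟨N, hN⟩ := (htend.eventually_ge_atTop 2).exists
    linarith [hkey N]
  linarith

set_option maxHeartbeats 2000000 in
lemma gen_part (hs0 : s ≤ 0) {t : ℝ} (ht0 : 0 ≤ t) (ht1 : t < 1) :
    Summable (fun n : ℕ => renA s n * t ^ n) ∧
    Summable (fun n : ℕ => bet s (n + 1) * t ^ (n + 1)) ∧
    ∑' n : ℕ, renA s n * t ^ n = (1 - ∑' n : ℕ, bet s (n + 1) * t ^ (n + 1))⁻¹ := by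
  have hbet_sm : Summable (bet s) := (summable_nat_add_iff 1).mp (bet_summable hs0)
  have hfnn : ∀ n : ℕ, 0 ≤ renA s n * t ^ n := fun n =>
    mul_nonneg (renA_pos n).le (pow_nonneg ht0 n)
  have hgnn : ∀ n : ℕ, 0 ≤ bet s n * t ^ n := fun n =>
    mul_nonneg (bet_nonneg hs0 n) (pow_nonneg ht0 n)
  have hf : Summable (fun n : ℕ => renA s n * t ^ n) := by
    apply Summable.of_nonneg_of_le hfnn ?_ (summable_geometric_of_lt_one ht0 ht1)
    intro n
    have h1 : renA s n ≤ 1 := by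
      have := renA_anti hs0 (Nat.zero_le n)
      rwa [renA_zero] at this
    calc renA s n * t ^ n ≤ 1 * t ^ n :=
          mul_le_mul_of_nonneg_right h1 (pow_nonneg ht0 n)
      _ = t ^ n := one_mul _
  have hg : Summable (fun n : ℕ => bet s n * t ^ n) := by
    apply Summable.of_nonneg_of_le hgnn ?_ hbet_sm
    intro n
    calc bet s n * t ^ n ≤ bet s n * 1 := by
          apply mul_le_mul_of_nonneg_left ?_ (bet_nonneg hs0 n)
          exact pow_le_one₀ ht0 ht1.le
      _ = bet s n := mul_one _
  refine ⟨hf, (summable_nat_add_iff 1).mpr hg, ?_⟩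
  -- norms
  have hfn : Summable (fun n : ℕ => ‖renA s n * t ^ n‖) := by
    simpa only [Real.norm_eq_abs] using hf.abs
  have hgn : Summable (fun n : ℕ => ‖bet s n * t ^ n‖) := by
    simpa only [Real.norm_eq_abs] using hg.abs
  set F := ∑' n : ℕ, renA s n * t ^ n with hF
  have hcauchy := tsum_mul_tsum_eq_tsum_sum_range_of_summable_norm hfn hgn
  have hinner : ∀ n : ℕ, ∑ k ∈ Finset.range (n + 1),
      (renA s k * t ^ k) * (bet s (n - k) * t ^ (n - k))
      = renA s n * t ^ n - (if n = 0 then 1 else 0) := by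
    intro n
    rcases Nat.eq_zero_or_pos n with rfl | hn
    · simp [bet, renA_zero]
    · have step1 : ∀ k ∈ Finset.range (n + 1),
          (renA s k * t ^ k) * (bet s (n - k) * t ^ (n - k))
          = bet s (n - k) * renA s k * t ^ n := by
        intro k hk
        have hk' : k ≤ n := by simpa [Nat.lt_succ_iff] using hk
        rw [show (renA s k * t ^ k) * (bet s (n - k) * t ^ (n - k))
            = bet s (n - k) * renA s k * (t ^ k * t ^ (n - k)) by ring,
          ← pow_add, Nat.add_sub_cancel' hk']
      rw [Finset.sum_congr rfl step1, ← Finset.sum_mul]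
      have hrefl : ∑ k ∈ Finset.range (n + 1), bet s (n - k) * renA s k
          = ∑ j ∈ Finset.range (n + 1), bet s j * renA s (n - j) := by
        rw [← Finset.sum_range_reflect (fun k => bet s (n - k) * renA s k) (n + 1)]
        apply Finset.sum_congr rfl
        intro j hj
        have hj' : j ≤ n := by simpa [Nat.lt_succ_iff] using hj
        have h1 : n + 1 - 1 - j = n - j := by omega
        have h2 : n - (n - j) = j := by omega
        rw [h1, h2]
      have hIcc : ∑ j ∈ Finset.range (n + 1), bet s j * renA s (n - j)
          = ∑ j ∈ Finset.Icc 1 n, bet s j * renA s (n - j) := by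
        rw [Finset.sum_range_succ' (fun j => bet s j * renA s (n - j)) n,
          sum_Icc_one (fun j => bet s j * renA s (n - j)) n]
        simp [bet_zero]
      rw [hrefl, hIcc, ← bet_rec s n hn, if_neg (by omega : ¬ n = 0)]
      ring
  rw [tsum_congr hinner] at hcauchy
  -- ∑' (f n - δ n) = F - 1
  have hdelta : Summable (fun n : ℕ => (if n = 0 then (1:ℝ) else 0)) := by
    apply summable_of_finite_support
    apply Set.Finite.subset (Set.finite_singleton 0)
    intro n hn
    simp only [Function.mem_support] at hn
    by_contra h
    simp [h] at hn
    exact h hn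
  have htd : ∑' n : ℕ, (renA s n * t ^ n - (if n = 0 then (1:ℝ) else 0)) = F - 1 := by
    rw [Summable.tsum_sub hf hdelta, ← hF, tsum_ite_eq 0 (fun _ => (1:ℝ))]
  rw [htd] at hcauchy
  -- F ≥ 1
  have hF1 : (1:ℝ) ≤ F := by
    have := Summable.le_tsum hf 0 (fun i _ => hfnn i)
    simpa [renA_zero] using this
  have hFne : F ≠ 0 := by linarith
  -- shift for G
  have hGshift : ∑' n : ℕ, bet s (n + 1) * t ^ (n + 1) = ∑' n : ℕ, bet s n * t ^ n := by
    rw [Summable.tsum_eq_zero_add hg, bet_zero]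
    ring
  rw [hGshift]
  -- F * G = F - 1  ⟹  F = (1 - G)⁻¹
  set G := ∑' n : ℕ, bet s n * t ^ n with hG
  have : F * (1 - G) = 1 := by rw [mul_sub, hcauchy]; ring
  have h1G : 1 - G ≠ 0 := by
    intro h
    rw [h, mul_zero] at this
    norm_num at this
  field_simp at this ⊢
  linarith [this]

lemma bet_one_pos : 0 < bet s 1 := by
  have : bet s 1 = renA s 1 := by
    rw [bet]
    rw [show Finset.Icc 1 0 = (∅ : Finset ℕ) by rfl]
    simp
  rw [this]
  exact renA_pos 1


/-- For every `s ∈ [−1,0]`, the sequence `a_n = (n+1)^s` is the renewal sequence of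
probability weights `β_n`, `n ≥ 1`, with `β_1 > 0`: `a_0 = 1`,
`a_n = Σ_{k=1}^n β_k a_{n−k}`, and equivalently
`Σ_{n≥0} (n+1)^s tⁿ = (1 − Σ_{n≥1} β_n tⁿ)⁻¹` for `t ∈ [0,1)`. -/
theorem rpow_kernel_is_renewal (s : ℝ) (hs1 : -1 ≤ s) (hs0 : s ≤ 0) :
    ∃ β : ℕ → ℝ,
      (∀ n : ℕ, 0 ≤ β n) ∧
      HasSum (fun n : ℕ => β (n + 1)) 1 ∧
      0 < β 1 ∧
      (((0 : ℕ) : ℝ) + 1) ^ s = 1 ∧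
      (∀ n : ℕ, 1 ≤ n →
        ((n : ℝ) + 1) ^ s = ∑ k ∈ Finset.Icc 1 n, β k * (((n - k : ℕ) : ℝ) + 1) ^ s) ∧
      ∀ t : ℝ, 0 ≤ t → t < 1 →
        Summable (fun n : ℕ => ((n : ℝ) + 1) ^ s * t ^ n) ∧
        Summable (fun n : ℕ => β (n + 1) * t ^ (n + 1)) ∧
        ∑' n : ℕ, ((n : ℝ) + 1) ^ s * t ^ n =
          (1 - ∑' n : ℕ, β (n + 1) * t ^ (n + 1))⁻¹ := by
  refine ⟨bet s, fun n => bet_nonneg hs0 n, bet_hasSum hs1 hs0, bet_one_pos, ?_, ?_, ?_⟩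
  · simpa using renA_zero (s := s)
  · intro n hn
    exact bet_rec s n hn
  · intro t ht0 ht1
    exact gen_part hs0 ht0 ht1
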